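/- For every real number t > 0, define V₃(t) = 3t(2 + 3t⁻³) if t⁻³ ≤ 2/9 and V₃(t) = 8t if t⁻³ ≥ 2/9. Then V₃(t) ∈ E(t), and every element e of E(t) with e ∉ {γ₁(t), γ₂(t)} satisfies e ≥ V₃(t). -/
import Mathlib


/-- `γ_n(t) = t·n·(2 + n·t⁻³)` -/
noncomputable def gammaF (t : ℝ) (n : ℕ) : ℝ := t * n * (2 + n * (t ^ 3)⁻¹)

/-- `α_k(t) = t·(k(k+2) − 1 + t⁻³)` -/
noncomputable def alphaF (t : ℝ) (k : ℕ) : ℝ := t * (k * (k + 2) - 1 + (t ^ 3)⁻¹)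

/-- `β_l(t) = t·l·(l+2)` -/
noncomputable def betaF (t : ℝ) (l : ℕ) : ℝ := t * l * (l + 2)

/-- The set `E(t)` of nonzero eigenvalues of the unit-volume Berger sphere Laplacian. -/
def EV (t : ℝ) : Set ℝ :=
  {x | ∃ n : ℕ, 1 ≤ n ∧ x = gammaF t n} ∪
  {x | ∃ k : ℕ, Odd k ∧ 1 ≤ k ∧ x = alphaF t k} ∪
  {x | ∃ l : ℕ, Even l ∧ 2 ≤ l ∧ x = betaF t l}

theorem berger_lambda3 (t : ℝ) (ht : 0 < t) :
    ∃ V : ℝ,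
      ((t ^ 3)⁻¹ ≤ 2 / 9 → V = 3 * t * (2 + 3 * (t ^ 3)⁻¹)) ∧
      (2 / 9 ≤ (t ^ 3)⁻¹ → V = 8 * t) ∧
      V ∈ EV t ∧
      ∀ e ∈ EV t, e ∉ ({gammaF t 1, gammaF t 2} : Set ℝ) → V ≤ e := by
  set s : ℝ := (t ^ 3)⁻¹ with hs
  have hs0 : 0 < s := by positivity
  refine ⟨min (gammaF t 3) (betaF t 2), ?_, ?_, ?_, ?_⟩
  · intro h
    have : gammaF t 3 ≤ betaF t 2 := by
      simp only [gammaF, betaF]; push_cast; nlinarith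
    rw [min_eq_left this]
    simp only [gammaF]; push_cast; ring
  · intro h
    have : betaF t 2 ≤ gammaF t 3 := by
      simp only [gammaF, betaF]; push_cast; nlinarith
    rw [min_eq_right this]
    simp only [betaF]; push_cast; ring
  · by_cases h : gammaF t 3 ≤ betaF t 2
    · rw [min_eq_left h]
      exact Or.inl (Or.inl ⟨3, by norm_num⟩)
    · rw [min_eq_right (le_of_not_ge h)]
      exact Or.inr ⟨2, by norm_num⟩
  · rintro e he hne
    have hVg : min (gammaF t 3) (betaF t 2) ≤ gammaF t 3 := min_le_left _ _
    have hVb : min (gammaF t 3) (betaF t 2) ≤ betaF t 2 := min_le_right _ _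
    rcases he with (⟨n, hn1, rfl⟩ | ⟨k, hko, hk1, rfl⟩) | ⟨l, hle, hl2, rfl⟩
    · have hn3 : 3 ≤ n := by
        rcases Nat.lt_or_ge n 3 with h | h
        · interval_cases n
          · exact absurd (Set.mem_insert _ _) hne
          · exact absurd (Set.mem_insert_of_mem _ rfl) hne
        · exact h
      have hn3' : (3:ℝ) ≤ (n:ℝ) := by exact_mod_cast hn3
      refine hVg.trans ?_
      simp only [gammaF]; push_cast
      nlinarith [mul_pos ht hs0, mul_nonneg (mul_pos ht hs0).le (mul_nonneg (sub_nonneg.2 hn3') (by nlinarith : (0:ℝ) ≤ (n:ℝ) + 3)), mul_nonneg ht.le (sub_nonneg.2 hn3')]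
    · have hk3 : 3 ≤ k := by
        rcases hko with ⟨m, rfl⟩
        rcases Nat.eq_zero_or_pos m with rfl | hm
        · exfalso
          apply hne
          left
          simp only [alphaF, gammaF]; push_cast; ring
        · omega
      have hk3' : (3:ℝ) ≤ (k:ℝ) := by exact_mod_cast hk3
      refine hVb.trans ?_
      simp only [alphaF, betaF]; push_cast
      nlinarith [mul_pos ht hs0, mul_nonneg ht.le (sub_nonneg.2 hk3'), mul_nonneg ht.le (mul_nonneg (sub_nonneg.2 hk3') (by nlinarith : (0:ℝ) ≤ (k:ℝ) + 3))]
    · have hl2' : (2:ℝ) ≤ (l:ℝ) := by exact_mod_cast hl2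
      refine hVb.trans ?_
      simp only [betaF]; push_cast
      nlinarith [mul_nonneg ht.le (mul_nonneg (sub_nonneg.2 hl2') (by nlinarith : (0:ℝ) ≤ (l:ℝ) + 4))]
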